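/- Assume ⟨α^∨,q⟩ ≥ 0 and ⟨β^∨,q⟩ ≥ 0 for all q ∈ Q, that ⟨α^∨,β⟩ ≤ 0 and ⟨β^∨,α⟩ ≤ 0, and that conditions (∗)_α and (∗)_β hold, with F_α and F_β the facets they provide. Let D ∈ Hom_ℤ(Ξ,ℤ) satisfy D ∈ {ρ_{F_α}, α^∨|_Ξ − ρ_{F_α}}, D ∈ {ρ_{F_β}, β^∨|_Ξ − ρ_{F_β}}, and ⟨D,α⟩ = ⟨D,β⟩ = 1. Then D is a primitive inward-pointing facet normal of Q, i.e. D = ρ_F for some facet F of Q. -/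

import Mathlib

variable {V : Type*} [AddCommGroup V] [Module ℚ V]

/-- `F` is a facet of the polytope `Q`: a nonempty proper exposed face of
codimension one. -/
def IsFacet (Q F : Set V) : Prop :=
  F.Nonempty ∧ F ≠ Q ∧
    (∃ (f : V →ₗ[ℚ] ℚ) (c : ℚ), (∀ q ∈ Q, c ≤ f q) ∧ F = {q ∈ Q | f q = c}) ∧
    Module.finrank ℚ ↥((affineSpan ℚ F).direction) + 1 =
      Module.finrank ℚ ↥((affineSpan ℚ Q).direction)

/-- `ρ` and `m` form the primitive inward-pointing normal data of the facet `F` of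
the polytope `Q`, relative to the lattice `Ξ` and the base point `ω`: `ρ` represents
an element of `Hom_ℤ(Ξ,ℤ)` (it is integer valued on `Ξ`) which is primitive (it
attains the value `1` on `Ξ`), and the affine functional `q ↦ ρ (q - ω) + m` is
nonnegative on `Q` and vanishes exactly on `F`. -/
def IsNormalData (Ξ : Submodule ℤ V) (Q : Set V) (ω : V) (F : Set V)
    (ρ : V →ₗ[ℚ] ℚ) (m : ℚ) : Prop :=
  (∀ x ∈ Ξ, ∃ n : ℤ, ρ x = (n : ℚ)) ∧ (∃ x ∈ Ξ, ρ x = 1) ∧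
    (∀ q ∈ Q, 0 ≤ ρ (q - ω) + m) ∧ (∀ q ∈ Q, (ρ (q - ω) + m = 0 ↔ q ∈ F))

/-- `α` is a primitive element of the lattice `Ξ`. -/
def IsPrimitiveIn (Ξ : Submodule ℤ V) (α : V) : Prop :=
  α ∈ Ξ ∧ α ≠ 0 ∧ ∀ (n : ℤ) (x : V), x ∈ Ξ → α = n • x → n = 1 ∨ n = -1

/-- min of a linear functional over a convex hull. -/
lemma hull_le (s : Finset V) (g : V →ₗ[ℚ] ℚ) (c : ℚ) (hc : ∀ x ∈ s, c ≤ g x) :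
    ∀ q ∈ convexHull ℚ (s : Set V), c ≤ g q := by
  intro q hq
  have := convexHull_min (show (s : Set V) ⊆ {w | c ≤ g w} from hc)
    (convex_halfSpace_ge (LinearMap.isLinear g) c)
  exact this hq

/-- the argmin face of a convex hull is the hull of the argmins. -/
lemma face_hull (s : Finset V) (g : V →ₗ[ℚ] ℚ) (c : ℚ) (hc : ∀ x ∈ s, c ≤ g x) :
    {q ∈ convexHull ℚ (s : Set V) | g q = c}
      = convexHull ℚ ((s.filter (fun x => g x = c) : Finset V) : Set V) := by
  ext q
  constructor
  · rintro ⟨hq, hgq⟩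
    rw [Finset.mem_convexHull'] at hq ⊢
    obtain ⟨w, hw0, hw1, hwq⟩ := hq
    have hzero : ∀ y ∈ s, w y * (g y - c) = 0 := by
      intro y hy
      have hsum : ∑ y ∈ s, w y * (g y - c) = 0 := by
        have : ∑ y ∈ s, w y * (g y - c) = g q - c := by
          rw [← hwq]
          simp [mul_sub, Finset.sum_sub_distrib, ← Finset.sum_mul, hw1, map_sum,
            map_smul, smul_eq_mul]
        rw [this, hgq, sub_self]
      exact (Finset.sum_eq_zero_iff_of_nonneg (fun y hy =>
        mul_nonneg (hw0 y hy) (sub_nonneg.2 (hc y hy)))).1 hsum y hy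
    have hkill : ∀ y ∈ s, ¬ (g y = c) → w y = 0 := by
      intro y hy hne
      rcases mul_eq_zero.1 (hzero y hy) with h | h
      · exact h
      · exact absurd (sub_eq_zero.1 h) hne
    refine ⟨w, fun y hy => hw0 y (Finset.mem_of_mem_filter y hy), ?_, ?_⟩
    · rw [← hw1]
      exact Finset.sum_filter_of_ne (fun y hy h => by
        by_contra hne
        exact h (hkill y hy hne))
    · rw [← hwq]
      exact Finset.sum_filter_of_ne (fun y hy h => by
        by_contra hne
        exact h (by rw [hkill y hy hne, zero_smul]))
  · intro hq
    have hsub : q ∈ convexHull ℚ (s : Set V) :=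
      convexHull_mono (by exact_mod_cast Finset.filter_subset _ s) hq
    refine ⟨hsub, le_antisymm ?_ ?_⟩
    · rw [Finset.mem_convexHull'] at hq
      obtain ⟨w, hw0, hw1, hwq⟩ := hq
      have : g q = ∑ y ∈ s.filter (fun x => g x = c), w y * g y := by
        rw [← hwq]; simp [map_sum, smul_eq_mul]
      rw [this]
      have : ∑ y ∈ s.filter (fun x => g x = c), w y * g y = c := by
        rw [Finset.sum_congr rfl (fun y hy => ?_)]
        · rw [← Finset.sum_mul, hw1, one_mul]
        · rw [(Finset.mem_filter.1 hy).2]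
      rw [this]
    · exact hull_le s g c hc q hsub




lemma span_singleton_neg' (a : ℚ) : Submodule.span ℤ {-a} = Submodule.span ℤ {a} := by
  ext x
  simp only [Submodule.mem_span_singleton]
  constructor
  · rintro ⟨k, rfl⟩; exact ⟨-k, by simp⟩
  · rintro ⟨k, rfl⟩; exact ⟨-k, by simp⟩

lemma finset_le_span_inv (t : Finset ℚ) :
    ∃ b : ℕ, 0 < b ∧ Submodule.span ℤ (t : Set ℚ) ≤ Submodule.span ℤ {(1:ℚ)/b} := by
  classical
  induction t using Finset.induction with
  | empty => exact ⟨1, one_pos, by simp⟩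
  | @insert r t hr ih =>
    obtain ⟨b, hb, hle⟩ := ih
    refine ⟨r.den * b, by positivity, ?_⟩
    rw [Finset.coe_insert, Submodule.span_insert, sup_le_iff]
    constructor
    · rw [Submodule.span_singleton_le_iff_mem, Submodule.mem_span_singleton]
      refine ⟨r.num * b, ?_⟩
      have hden : ((r.den : ℚ)) ≠ 0 := by
        exact_mod_cast r.den_nz
      have hbne : ((b : ℚ)) ≠ 0 := by exact_mod_cast hb.ne'
      rw [zsmul_eq_mul]
      push_cast
      conv_rhs => rw [← Rat.num_div_den r]
      field_simp
    · refine hle.trans ?_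
      rw [Submodule.span_singleton_le_iff_mem, Submodule.mem_span_singleton]
      refine ⟨(r.den : ℤ), ?_⟩
      push_cast
      rw [zsmul_eq_mul]
      push_cast
      field_simp

/-- a nontrivial finitely generated ℤ-submodule of ℚ has a positive generator. -/
lemma exists_pos_gen (A : Submodule ℤ ℚ) (hfg : A.FG) (hne : A ≠ ⊥) :
    ∃ a : ℚ, 0 < a ∧ A = Submodule.span ℤ {a} := by
  obtain ⟨t, ht⟩ := hfg
  obtain ⟨b, hb, hle⟩ := finset_le_span_inv t
  rw [ht] at hle
  have hbq : ((b:ℚ)) ≠ 0 := by exact_mod_cast hb.ne'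
  set c : ℚ := (1:ℚ)/b with hc
  have hcne : c ≠ 0 := by simp [hc, hbq]
  -- the ideal of multipliers
  let I : Ideal ℤ := {
    carrier := {k : ℤ | (k : ℚ) * c ∈ A}
    add_mem' := by
      intro x y hx hy
      simp only [Set.mem_setOf_eq] at *
      push_cast
      rw [add_mul]
      exact A.add_mem hx hy
    zero_mem' := by simp
    smul_mem' := by
      intro x y hy
      simp only [Set.mem_setOf_eq, smul_eq_mul] at *
      push_cast
      rw [mul_assoc, ← zsmul_eq_mul]
      exact A.smul_mem x hy }
  obtain ⟨b0, hb0⟩ : ∃ b0 : ℤ, I = Ideal.span {b0} := by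
    haveI hpr := IsPrincipalIdealRing.principal I
    exact ⟨Submodule.IsPrincipal.generator I,
      (Ideal.span_singleton_generator I).symm⟩
  have hmemI : ∀ k : ℤ, k ∈ I ↔ (k:ℚ) * c ∈ A := fun k => Iff.rfl
  have hA : A = Submodule.span ℤ {(b0:ℚ) * c} := by
    apply le_antisymm
    · intro x hx
      obtain ⟨k, hk⟩ := Submodule.mem_span_singleton.1 (hle hx)
      have hkI : k ∈ I := by
        rw [hmemI, ← zsmul_eq_mul, hk]
        exact hx
      rw [hb0, Ideal.mem_span_singleton] at hkI
      obtain ⟨u, rfl⟩ := hkI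
      rw [Submodule.mem_span_singleton]
      refine ⟨u, ?_⟩
      rw [← hk, zsmul_eq_mul, zsmul_eq_mul]
      push_cast
      ring
    · rw [Submodule.span_singleton_le_iff_mem]
      rw [← hmemI, hb0]
      exact Ideal.mem_span_singleton_self b0
  have hb0c : (b0:ℚ) * c ≠ 0 := by
    intro h
    apply hne
    rw [hA, h, Submodule.span_zero_singleton]
  rcases lt_or_gt_of_ne hb0c with hneg | hpos
  · refine ⟨-((b0:ℚ) * c), by linarith, ?_⟩
    rw [hA, ← span_singleton_neg' (-((b0:ℚ) * c)), neg_neg]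
  · exact ⟨(b0:ℚ) * c, hpos, hA⟩
lemma rotate_step [FiniteDimensional ℚ V] (s : Finset V) (W : Submodule ℚ V)
    (hWs : vectorSpan ℚ (s : Set V) = W)
    (d : V) (hdW : d ∈ W)
    (g : V →ₗ[ℚ] ℚ) (c : ℚ) (hgc : ∀ x ∈ s, c ≤ g x) (v : V) (hvs : v ∈ s) (hgv : g v = c)
    (hgd : 0 < g d)
    (hlt : Module.finrank ℚ (vectorSpan ℚ ((s.filter (fun x => g x = c) : Finset V) : Set V)) + 1 <
      Module.finrank ℚ W) :
    ∃ (g' : V →ₗ[ℚ] ℚ) (c' : ℚ), (∀ x ∈ s, c' ≤ g' x) ∧ (∃ v' ∈ s, g' v' = c') ∧ 0 < g' d ∧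
      Module.finrank ℚ (vectorSpan ℚ ((s.filter (fun x => g x = c) : Finset V) : Set V)) <
      Module.finrank ℚ (vectorSpan ℚ ((s.filter (fun x => g' x = c') : Finset V) : Set V)) := by
  classical
  set T : Finset V := s.filter (fun x => g x = c) with hT
  set K : Submodule ℚ V := vectorSpan ℚ (T : Set V) with hK
  have hvT : v ∈ T := Finset.mem_filter.2 ⟨hvs, hgv⟩
  have hKW : K ≤ W := by
    rw [← hWs]
    exact vectorSpan_mono ℚ (by exact_mod_cast Finset.coe_subset.2 (Finset.filter_subset _ s))
  have hdne : d ≠ 0 := by rintro rfl; simp at hgd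
  set U : Submodule ℚ V := K ⊔ Submodule.span ℚ {d} with hU
  have hdU : d ∈ U := le_sup_right (a := K) (Submodule.mem_span_singleton_self d)
  have hUW : U ≤ W := sup_le hKW ((Submodule.span_singleton_le_iff_mem d W).2 hdW)
  have hUrank : Module.finrank ℚ U ≤ Module.finrank ℚ K + 1 := by
    have h1 : Module.finrank ℚ U + Module.finrank ℚ (K ⊓ Submodule.span ℚ {d} : Submodule ℚ V)
        = Module.finrank ℚ K + Module.finrank ℚ (Submodule.span ℚ {d}) :=
      Submodule.finrank_sup_add_finrank_inf_eq K (Submodule.span ℚ {d})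
    have h2 : Module.finrank ℚ (Submodule.span ℚ {d}) = 1 := finrank_span_singleton hdne
    omega
  have hUlt : Module.finrank ℚ U < Module.finrank ℚ W := lt_of_le_of_lt hUrank hlt
  -- a point of s outside the rotation axis
  obtain ⟨x0, hx0s, hx0U⟩ : ∃ x0 ∈ s, x0 - v ∉ U := by
    by_contra hcon
    push_neg at hcon
    have : W ≤ U := by
      rw [← hWs, vectorSpan_eq_span_vsub_set_right ℚ (Finset.mem_coe.2 hvs), Submodule.span_le]
      rintro u ⟨x, hx, rfl⟩
      exact hcon x (Finset.mem_coe.1 hx)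
    exact absurd (Submodule.finrank_mono this) (not_le.2 hUlt)
  -- a functional vanishing on U but separating x0 - v
  obtain ⟨h0, hh0U, hh0x0⟩ : ∃ h0 : V →ₗ[ℚ] ℚ, (∀ u ∈ U, h0 u = 0) ∧ h0 (x0 - v) ≠ 0 := by
    have hmk : Submodule.Quotient.mk (p := U) (x0 - v) ≠ 0 := by
      rw [ne_eq, Submodule.Quotient.mk_eq_zero]
      exact hx0U
    obtain ⟨φ, hφ⟩ : ∃ φ : Module.Dual ℚ (V ⧸ U), φ (Submodule.Quotient.mk (x0 - v)) ≠ 0 := by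
      by_contra hcon
      push_neg at hcon
      exact hmk ((Module.forall_dual_apply_eq_zero_iff ℚ _).1 hcon)
    refine ⟨φ.comp U.mkQ, fun u hu => ?_, hφ⟩
    simp [Submodule.mkQ_apply, (Submodule.Quotient.mk_eq_zero U).2 hu]
  -- normalize the sign
  obtain ⟨h, hhU, x1, hx1s, hx1⟩ :
      ∃ h : V →ₗ[ℚ] ℚ, (∀ u ∈ U, h u = 0) ∧ ∃ x1 ∈ s, h x1 < h v := by
    rcases lt_or_gt_of_ne hh0x0 with hneg | hpos
    · refine ⟨h0, hh0U, x0, hx0s, ?_⟩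
      have : h0 x0 - h0 v < 0 := by rw [← map_sub]; exact hneg
      linarith
    · refine ⟨-h0, fun u hu => by simp [hh0U u hu], x0, hx0s, ?_⟩
      have : h0 x0 - h0 v > 0 := by rw [← map_sub]; exact hpos
      simp only [LinearMap.neg_apply]
      linarith
  have hhK : ∀ u ∈ K, h u = 0 := fun u hu => hhU u (le_sup_left (b := Submodule.span ℚ {d}) hu)
  have hhT : ∀ x ∈ T, h x = h v := by
    intro x hx
    have : x - v ∈ K := by
      have := vsub_mem_vectorSpan ℚ (Finset.mem_coe.2 hx) (Finset.mem_coe.2 hvT)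
      rwa [vsub_eq_sub] at this
    have := hhK _ this
    rw [map_sub] at this
    linarith
  set B : Finset V := s.filter (fun x => h x < h v) with hB
  have hx1B : x1 ∈ B := Finset.mem_filter.2 ⟨hx1s, hx1⟩
  have hBgt : ∀ x ∈ B, c < g x := by
    intro x hx
    obtain ⟨hxs, hxlt⟩ := Finset.mem_filter.1 hx
    rcases eq_or_lt_of_le (hgc x hxs) with heq | hlt'
    · exact absurd (hhT x (Finset.mem_filter.2 ⟨hxs, heq.symm⟩)) (ne_of_lt hxlt)
    · exact hlt'
  obtain ⟨xm, hxmB, hxmmin⟩ := B.exists_min_image (fun x => (g x - c) / (h v - h x))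
    ⟨x1, hx1B⟩
  set t : ℚ := (g xm - c) / (h v - h xm) with ht
  have hxmden : 0 < h v - h xm := sub_pos.2 (Finset.mem_filter.1 hxmB).2
  have htpos : 0 < t := div_pos (sub_pos.2 (hBgt xm hxmB)) hxmden
  set g' : V →ₗ[ℚ] ℚ := g + t • h with hg'
  set c' : ℚ := c + t * h v with hc'
  have hg'app : ∀ x : V, g' x = g x + t * h x := fun x => by
    simp [hg', smul_eq_mul]
  have hg'v : g' v = c' := by rw [hg'app, hgv]
  have hlb : ∀ x ∈ s, c' ≤ g' x := by
    intro x hxs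
    rw [hg'app, hc']
    rcases le_or_gt (h v) (h x) with hle | hltx
    · have := mul_le_mul_of_nonneg_left hle htpos.le
      have := hgc x hxs
      nlinarith
    · have hxB : x ∈ B := Finset.mem_filter.2 ⟨hxs, hltx⟩
      have := hxmmin x hxB
      have hden : 0 < h v - h x := sub_pos.2 hltx
      rw [le_div_iff₀ hden] at this
      nlinarith
  have hg'd : 0 < g' d := by
    rw [hg'app, hhU d hdU, mul_zero, add_zero]
    exact hgd
  set T' : Finset V := s.filter (fun x => g' x = c') with hT'
  have hTT' : T ⊆ T' := by
    intro x hx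
    obtain ⟨hxs, hgx⟩ := Finset.mem_filter.1 hx
    exact Finset.mem_filter.2 ⟨hxs, by rw [hg'app, hgx, hhT x hx, hc']⟩
  have hvT' : v ∈ T' := hTT' hvT
  have hxmT' : xm ∈ T' := by
    refine Finset.mem_filter.2 ⟨(Finset.mem_filter.1 hxmB).1, ?_⟩
    rw [hg'app, hc']
    have : t * (h v - h xm) = g xm - c := by
      rw [ht, div_mul_cancel₀ _ (ne_of_gt hxmden)]
    nlinarith [this]
  have hxmK : xm - v ∉ K := by
    intro hmem
    have := hhK _ hmem
    rw [map_sub] at this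
    have := (Finset.mem_filter.1 hxmB).2
    linarith
  have hKK' : K < vectorSpan ℚ ((T' : Finset V) : Set V) := by
    refine lt_of_le_of_ne (vectorSpan_mono ℚ (by exact_mod_cast hTT')) ?_
    intro heq
    apply hxmK
    rw [heq]
    have := vsub_mem_vectorSpan ℚ (Finset.mem_coe.2 hxmT') (Finset.mem_coe.2 hvT')
    rwa [vsub_eq_sub] at this
  exact ⟨g', c', hlb, ⟨v, hvs, hg'v⟩, hg'd, Submodule.finrank_lt_finrank_of_lt hKK'⟩

lemma build_facet [FiniteDimensional ℚ V]
    (Ξ : Submodule ℤ V) (hΞfg : Ξ.FG)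
    (s : Finset V) (Q : Set V) (hQs : Q = convexHull ℚ (s : Set V))
    (ω : V)
    (hfull : (affineSpan ℚ Q).direction = Submodule.span ℚ (Ξ : Set V))
    (d : V) (hd : d ∈ Ξ)
    (g : V →ₗ[ℚ] ℚ) (c : ℚ) (hgc : ∀ x ∈ s, c ≤ g x) (v : V) (hvs : v ∈ s) (hgv : g v = c)
    (hgd : 0 < g d)
    (hrank : Module.finrank ℚ (vectorSpan ℚ ((s.filter (fun x => g x = c) : Finset V) : Set V)) + 1
      = Module.finrank ℚ (Submodule.span ℚ (Ξ : Set V))) :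
    ∃ F ρ m, IsFacet Q F ∧ IsNormalData Ξ Q ω F ρ m ∧ 0 < ρ d := by
  classical
  set T : Finset V := s.filter (fun x => g x = c) with hT
  set F : Set V := {q ∈ Q | g q = c} with hF
  have hQle : ∀ q ∈ Q, c ≤ g q := by rw [hQs]; exact hull_le s g c hgc
  have hFhull : F = convexHull ℚ ((T : Finset V) : Set V) := by
    rw [hF, hQs]; exact face_hull s g c hgc
  have hvQ : v ∈ Q := by rw [hQs]; exact subset_convexHull ℚ _ hvs
  have hFne : F.Nonempty := ⟨v, hvQ, hgv⟩
  have hdirF : (affineSpan ℚ F).direction = vectorSpan ℚ ((T : Finset V) : Set V) := by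
    rw [hFhull,
      show affineSpan ℚ (convexHull ℚ ((T : Finset V) : Set V)) = affineSpan ℚ ((T : Finset V) : Set V)
        from affineSpan_convexHull _,
      direction_affineSpan]
  have hdirQ : (affineSpan ℚ Q).direction = vectorSpan ℚ (s : Set V) := by
    rw [hQs, show affineSpan ℚ (convexHull ℚ (s : Set V)) = affineSpan ℚ (s : Set V)
        from affineSpan_convexHull _, direction_affineSpan]
  have hFneQ : F ≠ Q := by
    intro heq
    have hTs : T = s := by
      apply Finset.filter_true_of_mem
      intro x hxs
      have hxQ : x ∈ Q := by rw [hQs]; exact subset_convexHull ℚ _ hxs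
      rw [← heq] at hxQ
      exact hxQ.2
    rw [hTs] at hrank
    rw [← hdirQ, hfull] at hrank
    omega
  have hfacet : IsFacet Q F := by
    refine ⟨hFne, hFneQ, ⟨g, c, hQle, rfl⟩, ?_⟩
    rw [hdirF, hfull] at *
    exact hrank
  -- normal data by rescaling g
  set A : Submodule ℤ ℚ := Submodule.map (g.restrictScalars ℤ) Ξ with hA
  have hAfg : A.FG := Submodule.FG.map _ hΞfg
  have hgdA : g d ∈ A := ⟨d, hd, rfl⟩
  have hAne : A ≠ ⊥ := by
    intro hbot
    rw [hbot, Submodule.mem_bot] at hgdA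
    rw [hgdA] at hgd
    exact lt_irrefl 0 hgd
  obtain ⟨a, hapos, haspan⟩ := exists_pos_gen A hAfg hAne
  have hane : a ≠ 0 := ne_of_gt hapos
  set ρ : V →ₗ[ℚ] ℚ := a⁻¹ • g with hρ
  have hρapp : ∀ x : V, ρ x = a⁻¹ * g x := fun x => by simp [hρ, smul_eq_mul]
  set m : ℚ := a⁻¹ * (g ω - c) with hm
  have hkey : ∀ q : V, ρ (q - ω) + m = a⁻¹ * (g q - c) := by
    intro q
    rw [hρapp, map_sub, hm]
    ring
  have hnd : IsNormalData Ξ Q ω F ρ m := by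
    refine ⟨?_, ?_, ?_, ?_⟩
    · intro x hx
      have hgxA : g x ∈ A := ⟨x, hx, rfl⟩
      rw [haspan, Submodule.mem_span_singleton] at hgxA
      obtain ⟨k, hk⟩ := hgxA
      refine ⟨k, ?_⟩
      rw [hρapp, ← hk, zsmul_eq_mul]
      field_simp
    · have haA : a ∈ A := by
        rw [haspan]
        exact Submodule.mem_span_singleton_self a
      obtain ⟨x, hxΞ, hgx⟩ := haA
      refine ⟨x, hxΞ, ?_⟩
      have hgx' : g x = a := hgx
      rw [hρapp, hgx']
      field_simp
    · intro q hq
      rw [hkey]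
      have h1 := hQle q hq
      have h2 : (0:ℚ) < a⁻¹ := by positivity
      nlinarith
    · intro q hq
      rw [hkey]
      constructor
      · intro h0
        rcases mul_eq_zero.1 h0 with h | h
        · exact absurd h (inv_ne_zero hane)
        · exact ⟨hq, by linarith [sub_eq_zero.1 h]⟩
      · rintro ⟨-, hgq⟩
        rw [hgq, sub_self, mul_zero]
  refine ⟨F, ρ, m, hfacet, hnd, ?_⟩
  rw [hρapp]
  positivity

lemma exists_facet_posPairing [FiniteDimensional ℚ V]
    (Ξ : Submodule ℤ V) (hΞfg : Ξ.FG)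
    (s : Finset V) (Q : Set V) (hQs : Q = convexHull ℚ (s : Set V))
    (ω : V) (hω : ω ∈ Q)
    (hfull : (affineSpan ℚ Q).direction = Submodule.span ℚ (Ξ : Set V))
    (d : V) (hd : d ∈ Ξ)
    (g0 : V →ₗ[ℚ] ℚ) (hg0 : 0 < g0 d) :
    ∃ F ρ m, IsFacet Q F ∧ IsNormalData Ξ Q ω F ρ m ∧ 0 < ρ d := by
  classical
  set W := Submodule.span ℚ (Ξ : Set V) with hW
  have hdW : d ∈ W := Submodule.subset_span hd
  have hsne : s.Nonempty := by
    rcases Finset.eq_empty_or_nonempty s with rfl | h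
    · rw [hQs] at hω; simp at hω
    · exact h
  have hWs : vectorSpan ℚ (s : Set V) = W := by
    rw [← hfull, hQs, show affineSpan ℚ (convexHull ℚ (s : Set V)) = affineSpan ℚ (s : Set V)
        from affineSpan_convexHull _, direction_affineSpan]
  have hrankle : ∀ (g : V →ₗ[ℚ] ℚ) (c : ℚ), 0 < g d →
      Module.finrank ℚ (vectorSpan ℚ ((s.filter (fun x => g x = c) : Finset V) : Set V)) + 1
        ≤ Module.finrank ℚ W := by
    intro g c hgd
    set K := vectorSpan ℚ ((s.filter (fun x => g x = c) : Finset V) : Set V) with hK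
    have hKW : K ≤ W := by
      rw [← hWs]
      exact vectorSpan_mono ℚ (by exact_mod_cast Finset.filter_subset _ s)
    have hKker : K ≤ LinearMap.ker g := by
      rw [hK, vectorSpan_def, Submodule.span_le]
      rintro w ⟨p1, hp1, p2, hp2, rfl⟩
      have h1 := (Finset.mem_filter.1 (Finset.mem_coe.1 hp1)).2
      have h2 := (Finset.mem_filter.1 (Finset.mem_coe.1 hp2)).2
      rw [SetLike.mem_coe, LinearMap.mem_ker]
      show g (p1 -ᵥ p2) = 0
      rw [vsub_eq_sub, map_sub, h1, h2, sub_self]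
    by_contra hcon
    push_neg at hcon
    have hEq : K = W := Submodule.eq_of_le_of_finrank_le hKW (by omega)
    have : g d = 0 := by
      have : d ∈ LinearMap.ker g := hKker (hEq ▸ hdW)
      exact LinearMap.mem_ker.1 this
    linarith
  have key : ∀ N : ℕ, ∀ g : V →ₗ[ℚ] ℚ, ∀ c : ℚ, (∀ x ∈ s, c ≤ g x) →
      (∃ v ∈ s, g v = c) → 0 < g d →
      Module.finrank ℚ W ≤
        Module.finrank ℚ (vectorSpan ℚ ((s.filter (fun x => g x = c) : Finset V) : Set V)) + 1 + N →
      ∃ F ρ m, IsFacet Q F ∧ IsNormalData Ξ Q ω F ρ m ∧ 0 < ρ d := by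
    intro N
    induction N with
    | zero =>
      intro g c hgc hv hgd hineq
      obtain ⟨v, hvs, hgv⟩ := hv
      refine build_facet Ξ hΞfg s Q hQs ω hfull d hd g c hgc v hvs hgv hgd ?_
      rw [← hW]
      have := hrankle g c hgd
      omega
    | succ N ih =>
      intro g c hgc hv hgd hineq
      obtain ⟨v, hvs, hgv⟩ := hv
      rcases Nat.lt_or_ge
        (Module.finrank ℚ (vectorSpan ℚ ((s.filter (fun x => g x = c) : Finset V) : Set V)) + 1)
        (Module.finrank ℚ W) with hlt | hge
      · obtain ⟨g', c', hgc', hv', hg'd, hrk⟩ :=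
          rotate_step s W hWs d hdW g c hgc v hvs hgv hgd hlt
        exact ih g' c' hgc' hv' hg'd (by omega)
      · refine build_facet Ξ hΞfg s Q hQs ω hfull d hd g c hgc v hvs hgv hgd ?_
        rw [← hW]
        have := hrankle g c hgd
        omega
  obtain ⟨v0, hv0s, hv0min⟩ := s.exists_min_image (fun x => g0 x) hsne
  exact key (Module.finrank ℚ W) g0 (g0 v0) (fun x hx => hv0min x hx) ⟨v0, hv0s, rfl⟩ hg0
    (by omega)

lemma facet_subset {Q F : Set V} (h : IsFacet Q F) : F ⊆ Q := by
  obtain ⟨-, -, ⟨f, c, -, hFeq⟩, -⟩ := h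
  rw [hFeq]
  exact fun q hq => hq.1

lemma direction_ker (Ξ : Submodule ℤ V) (Q : Set V) (ω : V) (F : Set V)
    (ρ : V →ₗ[ℚ] ℚ) (m : ℚ) (hFQ : F ⊆ Q) (hnd : IsNormalData Ξ Q ω F ρ m) :
    ∀ u ∈ (affineSpan ℚ F).direction, ρ u = 0 := by
  intro u hu
  rw [direction_affineSpan, vectorSpan_def] at hu
  have hle : Submodule.span ℚ (F -ᵥ F) ≤ LinearMap.ker ρ := by
    rw [Submodule.span_le]
    rintro w ⟨p1, hp1, p2, hp2, rfl⟩
    rw [SetLike.mem_coe, LinearMap.mem_ker]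
    show ρ (p1 -ᵥ p2) = 0
    have h1 : ρ (p1 - ω) + m = 0 := (hnd.2.2.2 p1 (hFQ hp1)).2 hp1
    have h2 : ρ (p2 - ω) + m = 0 := (hnd.2.2.2 p2 (hFQ hp2)).2 hp2
    rw [vsub_eq_sub, show p1 - p2 = (p1 - ω) - (p2 - ω) by abel, map_sub]
    linarith
  exact LinearMap.mem_ker.1 (hle hu)

lemma direction_le_W (Ξ : Submodule ℤ V) (Q : Set V) (ω : V)
    (hQΞ : ∀ q ∈ Q, q - ω ∈ Submodule.span ℚ (Ξ : Set V)) (F : Set V) (hFQ : F ⊆ Q) :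
    (affineSpan ℚ F).direction ≤ Submodule.span ℚ (Ξ : Set V) := by
  rw [direction_affineSpan, vectorSpan_def, Submodule.span_le]
  rintro w ⟨p1, hp1, p2, hp2, rfl⟩
  show (p1 -ᵥ p2) ∈ Submodule.span ℚ (Ξ : Set V)
  rw [vsub_eq_sub, show p1 - p2 = (p1 - ω) - (p2 - ω) by abel]
  exact Submodule.sub_mem _ (hQΞ p1 (hFQ hp1)) (hQΞ p2 (hFQ hp2))

lemma prop_on [FiniteDimensional ℚ V] (W K : Submodule ℚ V) (hKW : K ≤ W)
    (hrank : Module.finrank ℚ K + 1 = Module.finrank ℚ W)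
    (ρ1 ρ2 : V →ₗ[ℚ] ℚ) (a0 : V) (ha0W : a0 ∈ W)
    (h1K : ∀ u ∈ K, ρ1 u = 0) (h2K : ∀ u ∈ K, ρ2 u = 0)
    (hne : ρ2 a0 ≠ 0) :
    ∀ w ∈ W, ρ1 w = (ρ1 a0 / ρ2 a0) * ρ2 w := by
  have ha0K : a0 ∉ K := fun h => hne (h2K a0 h)
  have hsup : K ⊔ Submodule.span ℚ {a0} = W := by
    apply Submodule.eq_of_le_of_finrank_le
      (sup_le hKW ((Submodule.span_singleton_le_iff_mem _ _).2 ha0W))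
    have hKlt : K < K ⊔ Submodule.span ℚ {a0} := by
      refine lt_of_le_of_ne le_sup_left ?_
      intro heq
      apply ha0K
      rw [heq]
      exact (le_sup_right : Submodule.span ℚ {a0} ≤ K ⊔ Submodule.span ℚ {a0})
        (Submodule.mem_span_singleton_self a0)
    have := Submodule.finrank_lt_finrank_of_lt hKlt
    omega
  intro w hw
  rw [← hsup] at hw
  obtain ⟨u, huK, x, hx, rfl⟩ := Submodule.mem_sup.1 hw
  obtain ⟨t, rfl⟩ := Submodule.mem_span_singleton.1 hx
  rw [map_add, map_add, h1K u huK, h2K u huK, zero_add, zero_add, map_smul, map_smul,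
    smul_eq_mul, smul_eq_mul]
  field_simp

omit [Module ℚ V] in
lemma fg_of_le {Λ Ξ : Submodule ℤ V} (h : Ξ ≤ Λ) (hΛ : Λ.FG) : Ξ.FG := by
  haveI : IsNoetherian ℤ ↥Λ := isNoetherian_of_fg_of_noetherian Λ hΛ
  have hfg : (Ξ.comap Λ.subtype).FG := IsNoetherian.noetherian _
  have hmap := Submodule.FG.map Λ.subtype hfg
  rwa [Submodule.map_comap_subtype, inf_eq_right.2 h] at hmap

lemma main_branch [FiniteDimensional ℚ V]
    (Ξ : Submodule ℤ V) (Q : Set V) (ω : V)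
    (hQΞ : ∀ q ∈ Q, q - ω ∈ Submodule.span ℚ (Ξ : Set V))
    (hfull : (affineSpan ℚ Q).direction = Submodule.span ℚ (Ξ : Set V))
    (α β : V) (hαΞ : α ∈ Ξ) (hβΞ : β ∈ Ξ)
    (αv : V →ₗ[ℚ] ℚ) (hαvβ : αv β ≤ 0)
    (Fα : Set V) (ρα : V →ₗ[ℚ] ℚ) (mα : ℚ)
    (hFα : IsFacet Q Fα) (hρα : IsNormalData Ξ Q ω Fα ρα mα) (hραα : ρα α = 1)
    (hstarα : ∀ (F' : Set V) (ρ' : V →ₗ[ℚ] ℚ) (m' : ℚ),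
      IsFacet Q F' → IsNormalData Ξ Q ω F' ρ' m' → 0 < ρ' α →
        (affineSpan ℚ F' : Set V) = (affineSpan ℚ Fα : Set V) ∨
        (affineSpan ℚ F' : Set V) = (fun x => x - αv x • α) '' (affineSpan ℚ Fα : Set V))
    (D : V →ₗ[ℚ] ℚ) (hDint : ∀ x ∈ Ξ, ∃ n : ℤ, D x = (n : ℚ))
    (hDα2 : ∀ x ∈ Ξ, D x = αv x - ρα x)
    (hDa : D α = 1) (hDb : D β = 1)
    (G : Set V) (ρG : V →ₗ[ℚ] ℚ) (mG : ℚ)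
    (hFG : IsFacet Q G) (hNG : IsNormalData Ξ Q ω G ρG mG)
    (hρGα : 0 < ρG α) (hρGd : 0 < ρG (α + β)) :
    ∃ (F : Set V) (m : ℚ), IsFacet Q F ∧ IsNormalData Ξ Q ω F D m := by
  classical
  set W := Submodule.span ℚ (Ξ : Set V) with hW
  have hαW : α ∈ W := Submodule.subset_span hαΞ
  have hβW : β ∈ W := Submodule.subset_span hβΞ
  have habW : α + β ∈ W := W.add_mem hαW hβW
  have hDW : ∀ w ∈ W, D w = αv w - ρα w := by
    intro w hw
    have h1 : Set.EqOn ⇑D ⇑(αv - ρα) (Ξ : Set V) := by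
      intro x hx
      simpa using hDα2 x hx
    have h2 := LinearMap.eqOn_span' (f := D) (g := αv - ρα) h1 hw
    simpa using h2
  have hGQ : G ⊆ Q := facet_subset hFG
  have hFαQ : Fα ⊆ Q := facet_subset hFα
  have hραβ : ρα β = αv β - 1 := by
    have := hDα2 β hβΞ
    rw [hDb] at this
    linarith
  rcases hstarα G ρG mG hFG hNG hρGα with hspan | hspan
  · -- same hyperplane as Fα : contradiction with positivity at α + β
    exfalso
    have heq : affineSpan ℚ G = affineSpan ℚ Fα := AffineSubspace.coe_injective hspan
    set K : Submodule ℚ V := (affineSpan ℚ Fα).direction with hK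
    have hKW : K ≤ W := direction_le_W Ξ Q ω hQΞ Fα hFαQ
    have hrankK : Module.finrank ℚ K + 1 = Module.finrank ℚ W := by
      have := hFα.2.2.2
      rw [hfull] at this
      exact this
    have hkill1 : ∀ u ∈ K, ρG u = 0 := by
      intro u hu
      exact direction_ker Ξ Q ω G ρG mG hGQ hNG u (by rw [heq]; exact hu)
    have hkill2 : ∀ u ∈ K, ρα u = 0 := direction_ker Ξ Q ω Fα ρα mα hFαQ hρα
    have hprop := prop_on W K hKW hrankK ρG ρα α hαW hkill1 hkill2 (by rw [hραα]; norm_num)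
    have h1 := hprop (α + β) habW
    have h2 : ρα (α + β) = 1 + (αv β - 1) := by rw [map_add, hραα, hραβ]
    rw [hραα, div_one] at h1
    nlinarith
  · -- reflected hyperplane : ρG = D on W
    set K : Submodule ℚ V := (affineSpan ℚ G).direction with hK
    have hKW : K ≤ W := direction_le_W Ξ Q ω hQΞ G hGQ
    have hrankK : Module.finrank ℚ K + 1 = Module.finrank ℚ W := by
      have := hFG.2.2.2
      rw [hfull] at this
      exact this
    have hkill1 : ∀ u ∈ K, ρG u = 0 := direction_ker Ξ Q ω G ρG mG hGQ hNG
    -- D vanishes on K as well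
    have hKvs : K = vectorSpan ℚ ((fun x => x - αv x • α) '' (affineSpan ℚ Fα : Set V)) := by
      rw [hK, ← hspan, ← direction_affineSpan, AffineSubspace.affineSpan_coe]
    have hkill2 : ∀ u ∈ K, D u = 0 := by
      intro u hu
      rw [hKvs, vectorSpan_def] at hu
      have hle : Submodule.span ℚ
          (((fun x => x - αv x • α) '' (affineSpan ℚ Fα : Set V)) -ᵥ
            ((fun x => x - αv x • α) '' (affineSpan ℚ Fα : Set V))) ≤ LinearMap.ker D := by
        rw [Submodule.span_le]
        rintro w ⟨p1, hp1, p2, hp2, rfl⟩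
        obtain ⟨q1, hq1, rfl⟩ := hp1
        obtain ⟨q2, hq2, rfl⟩ := hp2
        rw [SetLike.mem_coe, LinearMap.mem_ker]
        show D ((q1 - αv q1 • α) -ᵥ (q2 - αv q2 • α)) = 0
        have huv : q1 -ᵥ q2 ∈ (affineSpan ℚ Fα).direction :=
          AffineSubspace.vsub_mem_direction hq1 hq2
        rw [vsub_eq_sub] at huv
        have hu1 : ρα (q1 - q2) = 0 :=
          direction_ker Ξ Q ω Fα ρα mα hFαQ hρα _ huv
        have hu2 : q1 - q2 ∈ W := direction_le_W Ξ Q ω hQΞ Fα hFαQ huv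
        have hDu : D (q1 - q2) = αv (q1 - q2) := by
          rw [hDW _ hu2, hu1, sub_zero]
        rw [vsub_eq_sub,
          show (q1 - αv q1 • α) - (q2 - αv q2 • α) = (q1 - q2) - (αv q1 - αv q2) • α by
            rw [sub_smul]; abel]
        rw [map_sub, map_smul, smul_eq_mul, hDa, mul_one, hDu, ← map_sub]
        exact sub_self _
      exact LinearMap.mem_ker.1 (hle hu)
    have hprop := prop_on W K hKW hrankK ρG D α hαW hkill1 hkill2 (by rw [hDa]; norm_num)
    rw [hDa, div_one] at hprop
    -- the scaling factor is 1
    obtain ⟨nlam, hnlam⟩ := hNG.1 α hαΞ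
    obtain ⟨x, hxΞ, hx1⟩ := hNG.2.1
    obtain ⟨k, hk⟩ := hDint x hxΞ
    have hxW : x ∈ W := Submodule.subset_span hxΞ
    have hmul : (nlam : ℚ) * (k : ℚ) = 1 := by
      have := hprop x hxW
      rw [hx1, hk, hnlam] at this
      linarith
    have hnlampos : 0 < nlam := by
      have : (0:ℚ) < (nlam : ℚ) := by rw [← hnlam]; exact hρGα
      exact_mod_cast this
    have hnlam1 : nlam = 1 := by
      have hint : nlam * k = 1 := by exact_mod_cast hmul
      rcases Int.isUnit_iff.1 (IsUnit.of_mul_eq_one _ hint) with h | h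
      · exact h
      · omega
    have hfinal : ∀ w ∈ W, ρG w = D w := by
      intro w hw
      rw [hprop w hw, hnlam, hnlam1]
      norm_num
    refine ⟨G, mG, hFG, hDint, ⟨α, hαΞ, hDa⟩, ?_, ?_⟩
    · intro q hq
      rw [← hfinal _ (hQΞ q hq)]
      exact hNG.2.2.1 q hq
    · intro q hq
      rw [← hfinal _ (hQΞ q hq)]
      exact hNG.2.2.2 q hq

theorem statement2 [FiniteDimensional ℚ V]
    (Λ Ξ : Submodule ℤ V) (hΞΛ : Ξ ≤ Λ) (hΛfg : Λ.FG)
    (hΛspan : Submodule.span ℚ (Λ : Set V) = ⊤)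
    (Q : Set V) (hQpoly : ∃ s : Finset V, Q = convexHull ℚ (s : Set V))
    (ω : V) (hω : ω ∈ Q)
    (hQΞ : ∀ q ∈ Q, q - ω ∈ Submodule.span ℚ (Ξ : Set V))
    (hQfull : Submodule.span ℚ {x : V | ∃ q ∈ Q, x = q - ω} =
      Submodule.span ℚ (Ξ : Set V))
    (α β : V) (hα : IsPrimitiveIn Ξ α) (hβ : IsPrimitiveIn Ξ β) (hαβ : α ≠ β)
    (αv βv : V →ₗ[ℚ] ℚ)
    (hαvΛ : ∀ x ∈ Λ, ∃ n : ℤ, αv x = (n : ℚ)) (hαvα : αv α = 2)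
    (hβvΛ : ∀ x ∈ Λ, ∃ n : ℤ, βv x = (n : ℚ)) (hβvβ : βv β = 2)
    (hαvβ : αv β ≤ 0) (hβvα : βv α ≤ 0)
    (hQα : ∀ q ∈ Q, 0 ≤ αv q) (hQβ : ∀ q ∈ Q, 0 ≤ βv q)
    -- condition (∗)_α, with the facet `Fα` it provides
    (Fα : Set V) (ρα : V →ₗ[ℚ] ℚ) (mα : ℚ)
    (hFα : IsFacet Q Fα) (hρα : IsNormalData Ξ Q ω Fα ρα mα) (hραα : ρα α = 1)
    (hstarα : ∀ (F' : Set V) (ρ' : V →ₗ[ℚ] ℚ) (m' : ℚ),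
      IsFacet Q F' → IsNormalData Ξ Q ω F' ρ' m' → 0 < ρ' α →
        (affineSpan ℚ F' : Set V) = (affineSpan ℚ Fα : Set V) ∨
        (affineSpan ℚ F' : Set V) =
          (fun x => x - αv x • α) '' (affineSpan ℚ Fα : Set V))
    -- condition (∗)_β, with the facet `Fβ` it provides
    (Fβ : Set V) (ρβ : V →ₗ[ℚ] ℚ) (mβ : ℚ)
    (hFβ : IsFacet Q Fβ) (hρβ : IsNormalData Ξ Q ω Fβ ρβ mβ) (hρββ : ρβ β = 1)
    (hstarβ : ∀ (F' : Set V) (ρ' : V →ₗ[ℚ] ℚ) (m' : ℚ),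
      IsFacet Q F' → IsNormalData Ξ Q ω F' ρ' m' → 0 < ρ' β →
        (affineSpan ℚ F' : Set V) = (affineSpan ℚ Fβ : Set V) ∨
        (affineSpan ℚ F' : Set V) =
          (fun x => x - βv x • β) '' (affineSpan ℚ Fβ : Set V))
    -- the functional `D ∈ Hom_ℤ(Ξ,ℤ)`
    (D : V →ₗ[ℚ] ℚ) (hDint : ∀ x ∈ Ξ, ∃ n : ℤ, D x = (n : ℚ))
    (hDα : (∀ x ∈ Ξ, D x = ρα x) ∨ (∀ x ∈ Ξ, D x = αv x - ρα x))
    (hDβ : (∀ x ∈ Ξ, D x = ρβ x) ∨ (∀ x ∈ Ξ, D x = βv x - ρβ x))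
    (hDa : D α = 1) (hDb : D β = 1) :
    ∃ (F : Set V) (m : ℚ), IsFacet Q F ∧ IsNormalData Ξ Q ω F D m := by
  classical
  -- if `D` agrees with a facet normal on `Ξ`, we are done
  have heasy : ∀ (F' : Set V) (ρ' : V →ₗ[ℚ] ℚ) (m' : ℚ), IsFacet Q F' →
      IsNormalData Ξ Q ω F' ρ' m' → (∀ x ∈ Ξ, D x = ρ' x) →
      ∃ (F : Set V) (m : ℚ), IsFacet Q F ∧ IsNormalData Ξ Q ω F D m := by
    intro F' ρ' m' hf hnd hagree
    have hDW : ∀ w ∈ Submodule.span ℚ (Ξ : Set V), D w = ρ' w := by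
      intro w hw
      exact LinearMap.eqOn_span' (f := D) (g := ρ') (fun x hx => hagree x hx) hw
    refine ⟨F', m', hf, hDint, ⟨α, hα.1, hDa⟩, ?_, ?_⟩
    · intro q hq
      rw [hDW _ (hQΞ q hq)]
      exact hnd.2.2.1 q hq
    · intro q hq
      rw [hDW _ (hQΞ q hq)]
      exact hnd.2.2.2 q hq
  rcases hDα with hDα1 | hDα2
  · exact heasy Fα ρα mα hFα hρα hDα1
  rcases hDβ with hDβ1 | hDβ2
  · exact heasy Fβ ρβ mβ hFβ hρβ hDβ1
  -- the hard case
  have hdimQ : (affineSpan ℚ Q).direction = Submodule.span ℚ (Ξ : Set V) := by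
    rw [direction_affineSpan, vectorSpan_eq_span_vsub_set_right ℚ hω, ← hQfull]
    congr 1
    ext y
    constructor
    · rintro ⟨q, hq, rfl⟩
      exact ⟨q, hq, (vsub_eq_sub q ω).symm⟩
    · rintro ⟨q, hq, rfl⟩
      exact ⟨q, hq, vsub_eq_sub q ω⟩
  have hΞfg : Ξ.FG := fg_of_le hΞΛ hΛfg
  obtain ⟨s, hQs⟩ := hQpoly
  have hd : α + β ∈ Ξ := Ξ.add_mem hα.1 hβ.1
  have hDd : 0 < D (α + β) := by
    rw [map_add, hDa, hDb]
    norm_num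
  obtain ⟨G, ρG, mG, hFG, hNG, hρGd⟩ :=
    exists_facet_posPairing Ξ hΞfg s Q hQs ω hω hdimQ (α + β) hd D hDd
  have hpos : 0 < ρG α ∨ 0 < ρG β := by
    by_contra hcon
    push_neg at hcon
    rw [map_add] at hρGd
    obtain ⟨h1, h2⟩ := hcon
    linarith
  rcases hpos with hpos | hpos
  · exact main_branch Ξ Q ω hQΞ hdimQ α β hα.1 hβ.1 αv hαvβ Fα ρα mα hFα hρα hραα hstarα
      D hDint hDα2 hDa hDb G ρG mG hFG hNG hpos hρGd
  · exact main_branch Ξ Q ω hQΞ hdimQ β α hβ.1 hα.1 βv hβvα Fβ ρβ mβ hFβ hρβ hρββ hstarβ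
      D hDint hDβ2 hDb hDa G ρG mG hFG hNG hpos (by rwa [add_comm])
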